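/- Fix b ≥ 2, a divisor n > 1 of b² + b − 1 with b of order r > 1 modulo n, and a prime power q with n ∣ q − 1. Define on L = (F_q)^r with basis e₀,…,e_{r−1} (indices mod r) the anti-commutative product: e₀·e₁ = e_{r−1}; e_{i−1}·e_i = e_{i−2} for 2 ≤ i ≤ r−1; e_{r−1}·e₀ = e_{r−2}; and e_i·e_j = 0 whenever j − i ≢ ±1 (mod r). Then L is a simple algebra: its only ideals are 0 and L. -/

import Mathlib

/-- Fix `b ≥ 2`, a divisor `n > 1` of `b² + b − 1` with `b` of
multiplicative order `r > 1` modulo `n`, and a prime power `q` with `n ∣ q − 1`.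
The anti-commutative algebra on `L = (F_q)^r` with basis `e₀,…,e_{r−1}` (indices
mod `r`) and products `e_i·e_{i+1} = e_{i−1}` (which encodes `e₀·e₁ = e_{r−1}`,
`e_{i−1}·e_i = e_{i−2}` for `2 ≤ i ≤ r−1`, and `e_{r−1}·e₀ = e_{r−2}`) and
`e_i·e_j = 0` whenever `j − i ≢ ±1 (mod r)`, is simple: its only ideals are `0`
and `L`. -/
theorem stmt17 (b n r q : ℕ) [NeZero r]
    (hb : 2 ≤ b) (hn : 1 < n) (hdvd : n ∣ b ^ 2 + b - 1)
    (hr : r = orderOf (b : ZMod n)) (hr1 : 1 < r)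
    (hq : IsPrimePow q) (hnq : n ∣ q - 1)
    {F : Type*} [Field F] [Fintype F] (hF : Fintype.card F = q)
    (mul : (Fin r → F) →ₗ[F] (Fin r → F) →ₗ[F] (Fin r → F))
    (halt : ∀ x : Fin r → F, mul x x = 0)
    (hmul : ∀ i : Fin r,
      mul (Pi.single i (1 : F)) (Pi.single (i + 1) (1 : F)) = Pi.single (i - 1) (1 : F))
    (hzero : ∀ i j : Fin r, j ≠ i + 1 → i ≠ j + 1 →
      mul (Pi.single i (1 : F)) (Pi.single j (1 : F)) = 0) :
    ∀ I : Submodule F (Fin r → F),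
      (∀ x ∈ I, ∀ y : Fin r → F, mul x y ∈ I) → I = ⊥ ∨ I = ⊤ := by
  intro I hI
  rcases eq_or_ne I ⊥ with hbot | hbot
  · exact Or.inl hbot
  right
  obtain ⟨x, hxI, hx0⟩ := (Submodule.ne_bot_iff I).mp hbot
  obtain ⟨k, hk⟩ := Function.ne_iff.mp hx0
  -- anticommutativity
  have hcomm : ∀ u v : Fin r → F, mul v u = - mul u v := by
    intro u v
    have h := halt (u + v)
    simp only [map_add, LinearMap.add_apply, halt u, halt v, zero_add, add_zero] at h
    exact eq_neg_of_add_eq_zero_left h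
  -- termwise computation
  have hterm : ∀ m i : Fin r,
      mul (mul (Pi.single i (1:F)) (Pi.single (m+1) (1:F))) (Pi.single m (1:F))
        = if i = m then Pi.single (m-2) (1:F) else 0 := by
    intro m i
    by_cases him : i = m
    · subst him
      rw [if_pos rfl, hmul i]
      have h1 : i - 1 + 1 = i := by open Fin.CommRing in ring
      have h2 := hmul (i - 1)
      rw [h1] at h2
      rw [h2]
      congr 1
      open Fin.CommRing in ring
    · rw [if_neg him]
      by_cases h2 : i = m + 2
      · subst h2
        have h3 : mul (Pi.single (m+2) (1:F)) (Pi.single (m+1) (1:F))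
            = - Pi.single m (1:F) := by
          rw [hcomm]
          have h4 := hmul (m+1)
          have e1 : m + 1 + 1 = m + 2 := by open Fin.CommRing in ring
          have e2 : m + 1 - 1 = m := by open Fin.CommRing in ring
          rw [e1, e2] at h4
          rw [h4]
        rw [h3, map_neg, LinearMap.neg_apply, halt, neg_zero]
      · have ha : m + 1 ≠ i + 1 := fun h => him (by
          have := add_right_cancel h.symm
          exact this)
        have hb' : i ≠ m + 1 + 1 := by
          intro h
          exact h2 (by rw [h]; open Fin.CommRing in ring)
        rw [hzero i (m+1) ha hb', map_zero, LinearMap.zero_apply]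
  -- key identity
  have key : ∀ y : Fin r → F, ∀ m : Fin r,
      mul (mul y (Pi.single (m+1) (1:F))) (Pi.single m (1:F))
        = y m • (Pi.single (m-2) (1:F) : Fin r → F) := by
    intro y m
    have hy : y = ∑ i, y i • (Pi.single i (1:F) : Fin r → F) := by
      funext j
      simp [Finset.sum_apply, Pi.single_apply]
    calc mul (mul y (Pi.single (m+1) (1:F))) (Pi.single m (1:F))
        = ∑ i, y i • mul (mul (Pi.single i (1:F)) (Pi.single (m+1) (1:F)))
            (Pi.single m (1:F)) := by
          conv_lhs => rw [hy]
          simp [map_sum, LinearMap.sum_apply, map_smul, LinearMap.smul_apply]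
      _ = ∑ i, y i • (if i = m then (Pi.single (m-2) (1:F) : Fin r → F) else 0) := by
          exact Finset.sum_congr rfl fun i _ => by rw [hterm m i]
      _ = y m • (Pi.single (m-2) (1:F) : Fin r → F) := by simp
  -- a basis vector lies in I
  have hkmem : Pi.single (k-2) (1:F) ∈ I := by
    have h1 := hI x hxI (Pi.single (k+1) 1)
    have h2 := hI _ h1 (Pi.single k 1)
    rw [key x k] at h2
    have h3 := I.smul_mem (x k)⁻¹ h2
    rwa [smul_smul, inv_mul_cancel₀ hk, one_smul] at h3
  -- hence all basis vectors lie in I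
  open Fin.CommRing in
  have hall : ∀ t : ℕ, Pi.single ((k-2) - (t : Fin r)) (1:F) ∈ I := by
    intro t
    induction t with
    | zero => simpa using hkmem
    | succ t ih =>
      have h1 := hI _ ih (Pi.single ((k-2) - (t:Fin r) + 1) 1)
      rw [hmul] at h1
      have e1 : (k-2) - ((t+1 : ℕ) : Fin r) = (k-2) - (t:Fin r) - 1 := by
        push_cast
        ring
      rw [e1]
      exact h1
  open Fin.CommRing in
  have hsingle : ∀ j : Fin r, Pi.single j (1:F) ∈ I := by
    intro j
    have h := hall ((k - 2 - j).val)
    rwa [Fin.cast_val_eq_self, sub_sub_cancel] at h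
  rw [eq_top_iff]
  intro y _
  have hy : y = ∑ i, y i • (Pi.single i (1:F) : Fin r → F) := by
    funext j
    simp [Finset.sum_apply, Pi.single_apply]
  rw [hy]
  exact Submodule.sum_mem I fun i _ => Submodule.smul_mem I _ (hsingle i)
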